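/- arXiv:1507.05984 — 5 statements merged into one kernel-verified Lean document; each statement's English description precedes it below -/
import Mathlib

section
/- Let Γ be an additive abelian group, let R be a semiprime Γ-graded ring, and let ε ∈ R be a nonzero homogeneous idempotent. Then the corner ring εRε, which is a ring with identity ε and is Γ-graded by (εRε)_γ = εR_γε, is a graded division ring — i.e., every nonzero homogeneous element u ∈ εR_γε has an element v ∈ εRε with uv = vu = ε — if and only if Rε is a minimal graded left ideal of R. -/
section Aux
variable {Γ R : Type*} [AddCommGroup Γ] [DecidableEq Γ] [Ring R]
variable (𝒜 : Γ → AddSubgroup R) [GradedRing 𝒜]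

lemma aux_decompose_mul_right {b : R} {j : Γ} (hb : b ∈ 𝒜 j) (a : R) (i : Γ) :
    (DirectSum.decompose 𝒜 (a * b) (i + j) : R) = (DirectSum.decompose 𝒜 a i : R) * b := by
  lift b to 𝒜 j using hb
  rw [DirectSum.decompose_mul, DirectSum.decompose_coe, DirectSum.coe_mul_of_apply_add]

lemma aux_span_graded {a : R} {γa : Γ} (ha : a ∈ 𝒜 γa) :
    ∀ x ∈ (Submodule.span R {a} : Ideal R), ∀ γ : Γ,
      (DirectSum.decompose 𝒜 x γ : R) ∈ (Submodule.span R {a} : Ideal R) := by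
  intro x hx γ
  obtain ⟨s, rfl⟩ := Ideal.mem_span_singleton'.mp hx
  have h : γ - γa + γa = γ := sub_add_cancel γ γa
  have h2 := aux_decompose_mul_right 𝒜 ha s (γ - γa)
  rw [h] at h2
  rw [h2]
  exact Ideal.mem_span_singleton'.mpr ⟨_, rfl⟩

lemma aux_exists_ne (x : R) (hx : x ≠ 0) : ∃ γ, (DirectSum.decompose 𝒜 x γ : R) ≠ 0 := by
  classical
  by_contra h
  push_neg at h
  apply hx
  rw [← DirectSum.sum_support_decompose 𝒜 x]
  exact Finset.sum_eq_zero fun γ _ => h γ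

end Aux


/-- Let `Γ` be an additive abelian group, `R` a semiprime `Γ`-graded ring,
and `ε` a nonzero homogeneous idempotent.  The corner ring `εRε` (graded by
`(εRε)_γ = ε R_γ ε`) is a graded division ring — every nonzero homogeneous element
`u = ε r ε` with `r ∈ R_γ` has `v ∈ εRε` with `u v = v u = ε` — if and only if
`Rε` is a minimal graded left ideal of `R`. -/
theorem graded_corner_division_iff_minimal_graded_left_ideal
    {Γ R : Type*} [AddCommGroup Γ] [DecidableEq Γ] [Ring R]
    (𝒜 : Γ → AddSubgroup R) [GradedRing 𝒜]
    (hsemiprime : ∀ a : R, (∀ r : R, a * r * a = 0) → a = 0)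
    (ε : R) (hε : ε ≠ 0) (hidem : ε * ε = ε) (hhom : ∃ γ : Γ, ε ∈ 𝒜 γ) :
    (∀ (γ : Γ) (r : R), r ∈ 𝒜 γ → ε * r * ε ≠ 0 →
        ∃ v : R, ε * v * ε = v ∧ (ε * r * ε) * v = ε ∧ v * (ε * r * ε) = ε) ↔
      ((Submodule.span R {ε} : Ideal R) ≠ ⊥ ∧
        (∀ x ∈ (Submodule.span R {ε} : Ideal R), ∀ γ : Γ,
          (DirectSum.decompose 𝒜 x γ : R) ∈ (Submodule.span R {ε} : Ideal R)) ∧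
        ∀ I : Ideal R,
          (∀ x ∈ I, ∀ γ : Γ, (DirectSum.decompose 𝒜 x γ : R) ∈ I) →
          I ≤ Submodule.span R {ε} → I = ⊥ ∨ I = Submodule.span R {ε}) := by
  classical
  obtain ⟨γ₀, hγ₀⟩ := hhom
  have hε0 : ε ∈ 𝒜 (0 : Γ) := by
    have h2 : ε ∈ 𝒜 (γ₀ + γ₀) := by
      have := SetLike.mul_mem_graded hγ₀ hγ₀
      rwa [hidem] at this
    by_cases h : γ₀ + γ₀ = γ₀
    · have h0 : γ₀ = 0 := by
        have h' : γ₀ + γ₀ = γ₀ + 0 := by rw [add_zero]; exact h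
        exact add_left_cancel h'
      rwa [h0] at hγ₀
    · exact absurd
        (by rw [← DirectSum.decompose_of_mem_same 𝒜 hγ₀,
              DirectSum.decompose_of_mem_ne 𝒜 h2 h]) hε
  constructor
  · -- division ⇒ minimal
    intro hdiv
    refine ⟨?_, aux_span_graded 𝒜 hε0, ?_⟩
    · intro hbot
      apply hε
      have : ε ∈ (⊥ : Ideal R) := hbot ▸ Submodule.mem_span_singleton_self ε
      simpa using this
    · intro I hIgr hle
      by_cases hI : I = ⊥
      · exact Or.inl hI
      · right
        obtain ⟨x, hxI, hx0⟩ := Submodule.exists_mem_ne_zero_of_ne_bot hI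
        obtain ⟨γ, haγ0⟩ := aux_exists_ne 𝒜 x hx0
        set a : R := (DirectSum.decompose 𝒜 x γ : R) with ha_def
        have haI : a ∈ I := hIgr x hxI γ
        have haγ : a ∈ 𝒜 γ := SetLike.coe_mem _
        obtain ⟨s, hs⟩ := Ideal.mem_span_singleton'.mp (hle haI)
        have haε : a * ε = a := by rw [← hs, mul_assoc, hidem]
        -- find t with ε * t * a ≠ 0
        have hta : ∃ t : R, ε * t * a ≠ 0 := by
          by_contra hc
          push_neg at hc
          apply haγ0
          apply hsemiprime
          intro t
          have step : a * t * a = s * (ε * t * a) := by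
            nth_rewrite 1 [← hs]
            rw [mul_assoc s ε t, mul_assoc s (ε * t) a]
          rw [step, hc, mul_zero]
        obtain ⟨t, hta⟩ := hta
        have hsum : ε * t * a = ∑ δ ∈ (DirectSum.decompose 𝒜 t).support,
            ε * (DirectSum.decompose 𝒜 t δ : R) * a := by
          conv_lhs => rw [← DirectSum.sum_support_decompose 𝒜 t]
          rw [Finset.mul_sum, Finset.sum_mul]
        have hδ : ∃ δ, ε * (DirectSum.decompose 𝒜 t δ : R) * a ≠ 0 := by
          by_contra hc
          push_neg at hc
          exact hta (hsum.trans (Finset.sum_eq_zero fun δ _ => hc δ))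
        obtain ⟨δ, hδ⟩ := hδ
        set c : R := (DirectSum.decompose 𝒜 t δ : R) with hc_def
        have hr' : c * a ∈ 𝒜 (δ + γ) := SetLike.mul_mem_graded (SetLike.coe_mem _) haγ
        have hform : ε * (c * a) * ε = ε * c * a := by
          simp only [mul_assoc]
          rw [haε]
        obtain ⟨v, _, _, hv3⟩ := hdiv (δ + γ) (c * a) hr' (by rw [hform]; exact hδ)
        have hεI : ε ∈ I := by
          have key : (v * (ε * c)) * a = ε := by
            calc (v * (ε * c)) * a = v * (ε * c * a) := mul_assoc v (ε * c) a
              _ = v * (ε * (c * a) * ε) := by rw [hform]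
              _ = ε := hv3
          exact key ▸ I.mul_mem_left (v * (ε * c)) haI
        exact le_antisymm hle ((Submodule.span_singleton_le_iff_mem ε I).mpr hεI)
  · -- minimal ⇒ division
    rintro ⟨-, hgr, hmin⟩ γ r hr hune
    set u : R := ε * r * ε with hu_def
    have hu_mem : u ∈ 𝒜 γ := by
      have := SetLike.mul_mem_graded (SetLike.mul_mem_graded hε0 hr) hε0
      simpa using this
    have hεu : ε * u = u := by rw [hu_def, ← mul_assoc, ← mul_assoc, hidem]
    have huε : u * ε = u := by rw [hu_def, mul_assoc (ε * r) ε ε, hidem]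
    -- span {u} = span {ε}
    have hule : (Submodule.span R {u} : Ideal R) ≤ Submodule.span R {ε} :=
      Submodule.span_le.mpr (by
        simp only [Set.singleton_subset_iff, SetLike.mem_coe]
        exact Ideal.mem_span_singleton'.mpr ⟨ε * r, rfl⟩)
    have hueq : (Submodule.span R {u} : Ideal R) = Submodule.span R {ε} := by
      rcases hmin _ (aux_span_graded 𝒜 hu_mem) hule with h | h
      · exfalso
        apply hune
        have hu : u ∈ (⊥ : Ideal R) := h ▸ Submodule.mem_span_singleton_self u
        simpa using hu
      · exact h
    obtain ⟨w, hw⟩ : ∃ w, w * u = ε := by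
      have : ε ∈ (Submodule.span R {u} : Ideal R) := by
        rw [hueq]; exact Submodule.mem_span_singleton_self ε
      exact Ideal.mem_span_singleton'.mp this
    refine ⟨ε * w * ε, ?_, ?_, ?_⟩
    · rw [← mul_assoc, ← mul_assoc, hidem, mul_assoc (ε * w) ε ε, hidem]
    · -- u * (ε*w*ε) = ε via graded annihilator ideal
      let L : Ideal R :=
        { carrier := {y | y ∈ (Submodule.span R {ε} : Ideal R) ∧ y * u = 0}
          add_mem' := fun ha hb => ⟨add_mem ha.1 hb.1, by rw [add_mul, ha.2, hb.2, add_zero]⟩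
          zero_mem' := ⟨zero_mem _, zero_mul u⟩
          smul_mem' := fun cc y hy =>
            ⟨Submodule.smul_mem _ cc hy.1, by rw [smul_eq_mul, mul_assoc, hy.2, mul_zero]⟩ }
      have hLgr : ∀ y ∈ L, ∀ γ' : Γ, (DirectSum.decompose 𝒜 y γ' : R) ∈ L := by
        intro y hy γ'
        refine ⟨hgr y hy.1 γ', ?_⟩
        have h2 := aux_decompose_mul_right 𝒜 hu_mem y γ'
        rw [hy.2] at h2
        simpa using h2.symm
      have hLle : L ≤ Submodule.span R {ε} := fun y hy => hy.1
      have hLbot : L = ⊥ := by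
        rcases hmin L hLgr hLle with h | h
        · exact h
        · exfalso
          have hεL : ε ∈ L := by
            rw [h]; exact Submodule.mem_span_singleton_self ε
          apply hune
          rw [← hεu]
          exact hεL.2
      have hsub : ε - u * (ε * w * ε) ∈ L := by
        refine ⟨sub_mem (Submodule.mem_span_singleton_self ε)
          (Ideal.mem_span_singleton'.mpr ⟨u * (ε * w), mul_assoc u (ε * w) ε⟩), ?_⟩
        have hvu : (ε * w * ε) * u = ε := by
          calc (ε * w * ε) * u = (ε * w) * (ε * u) := by rw [mul_assoc]
            _ = (ε * w) * u := by rw [hεu]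
            _ = ε * (w * u) := by rw [mul_assoc]
            _ = ε * ε := by rw [hw]
            _ = ε := hidem
        rw [sub_mul, hεu, mul_assoc, hvu, huε, sub_self]
      rw [hLbot] at hsub
      have := (Submodule.mem_bot R).mp hsub
      rw [sub_eq_zero] at this
      exact this.symm
    · calc (ε * w * ε) * u = (ε * w) * (ε * u) := mul_assoc (ε * w) ε u
        _ = (ε * w) * u := by rw [hεu]
        _ = ε * (w * u) := by rw [mul_assoc]
        _ = ε * ε := by rw [hw]
        _ = ε := hidem
end

section
/- Let K be a field, R an associative unital K-algebra, and M an injective left R-module. Suppose (N_i)_{i ∈ ι} is an independent family of nonzero R-submodules of M (i.e., the sum Σ_{i ∈ ι} N_i is an internal direct sum), where ι is an infinite index set. Then the dimension over K of the endomorphism ring End_R(M) is at least 2^{|ι|}. -/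
universe u

/-- Let `K` be a field, `R` an associative unital `K`-algebra and `M` an
injective left `R`-module.  If `(N i)_{i ∈ ι}` is an independent family of nonzero
`R`-submodules of `M` with `ι` infinite, then the `K`-dimension of the endomorphism ring
`End_R(M)` is at least `2 ^ |ι|`. -/
theorem rank_end_of_injective_with_independent_family
    {K R M ι : Type u} [Field K] [Ring R] [Algebra K R]
    [AddCommGroup M] [Module R M] [Module K M] [IsScalarTower K R M]
    [SMulCommClass R K M] [Module.Injective R M] [Infinite ι]
    (N : ι → Submodule R M) (hne : ∀ i, N i ≠ ⊥)
    (hindep : ∀ i, Disjoint (N i) (⨆ j ∈ ({i}ᶜ : Set ι), N j)) :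
    2 ^ Cardinal.mk ι ≤ Module.rank K (M →ₗ[R] M) := by
  classical
  -- the family is `iSupIndep`
  have hind : iSupIndep N := by
    intro i
    have := hindep i
    simpa [Set.mem_compl_iff] using this
  -- the canonical map from the direct sum is injective
  set φ : (Π₀ i, N i) →ₗ[R] M := DFinsupp.lsum ℕ (fun i => (N i).subtype) with hφ
  have hφinj : Function.Injective φ := hind.dfinsupp_lsum_injective
  -- restriction map to the product of Hom spaces is surjective
  set res : (M →ₗ[R] M) →ₗ[K] (∀ i, N i →ₗ[R] M) :=
    { toFun := fun f => fun i => f.comp (N i).subtype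
      map_add' := by intros; rfl
      map_smul' := by intros; rfl } with hres
  have hsurj : Function.Surjective res := by
    intro g
    -- build a map on the direct sum and extend via injectivity of `M`
    set ψ : (Π₀ i, N i) →ₗ[R] M := DFinsupp.lsum ℕ (fun i => g i) with hψ
    obtain ⟨h, hh⟩ := Module.Injective.out φ hφinj ψ
    refine ⟨h, ?_⟩
    funext i
    apply LinearMap.ext
    intro x
    have h1 : φ (DFinsupp.single i x) = (x : M) := by
      simp [hφ]
    have h2 : ψ (DFinsupp.single i x) = g i x := by
      simp [hψ]
    have := hh (DFinsupp.single i x)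
    calc res h i x = h ((x : M)) := rfl
      _ = h (φ (DFinsupp.single i x)) := by rw [h1]
      _ = ψ (DFinsupp.single i x) := this
      _ = g i x := h2
  -- each Hom space contains a nonzero element: the inclusion
  have hne' : ∀ i, ((N i).subtype : N i →ₗ[R] M) ≠ 0 := by
    intro i h
    apply hne i
    rw [Submodule.eq_bot_iff]
    intro x hx
    have := congrArg (fun f => f ⟨x, hx⟩) h
    simpa using this
  -- inject `ι → K` into the product
  set emb : (ι → K) →ₗ[K] (∀ i, N i →ₗ[R] M) :=
    { toFun := fun c => fun i => c i • (N i).subtype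
      map_add' := by intros; funext i; simp [add_smul]
      map_smul' := by intros; funext i; simp [mul_smul] } with hemb
  have hembinj : Function.Injective emb := by
    rw [injective_iff_map_eq_zero]
    intro c hc
    funext i
    have := congrFun hc i
    simp only [hemb, LinearMap.coe_mk, AddHom.coe_mk] at this
    rcases smul_eq_zero.mp this with h | h
    · exact h
    · exact absurd h (hne' i)
  have h1 : Module.rank K (ι → K) ≤ Module.rank K (∀ i, N i →ₗ[R] M) :=
    emb.rank_le_of_injective hembinj
  have h2 : Module.rank K (∀ i, N i →ₗ[R] M) ≤ Module.rank K (M →ₗ[R] M) :=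
    res.rank_le_of_surjective hsurj
  refine le_trans ?_ (h1.trans h2)
  rw [rank_fun_infinite]
  calc (2 : Cardinal) ^ Cardinal.mk ι
      ≤ (Cardinal.mk K) ^ Cardinal.mk ι := by
        apply Cardinal.power_le_power_right
        exact Cardinal.two_le_iff.mpr ⟨0, 1, zero_ne_one⟩
    _ = Cardinal.mk (ι → K) := (Cardinal.power_def K ι).symm
end

section
/- Let Γ be an additive abelian group and R a Γ-graded ring. If every graded-simple graded left R-module is projective as an R-module, then R is graded semi-simple: R is the internal direct sum of a family of minimal graded left ideals, i.e., there is an independent family (I_j) of minimal graded left ideals of R whose sum is all of R. -/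
set_option maxHeartbeats 1000000
set_option synthInstance.maxHeartbeats 400000

universe u v

open DirectSum

namespace GradedSS

variable {Γ : Type v} {R : Type u} [AddCommGroup Γ] [DecidableEq Γ] [Ring R]
  {𝒜 : Γ → AddSubgroup R} [GradedRing 𝒜]



theorem le_iff {I J : HomogeneousIdeal 𝒜} : I ≤ J ↔ I.toIdeal ≤ J.toIdeal :=
  ⟨fun h x hx => h hx, fun h x hx => h hx⟩

instance : IsModularLattice (HomogeneousIdeal 𝒜) := by
  constructor
  intro x y z xz
  rw [le_iff, HomogeneousIdeal.toIdeal_inf, HomogeneousIdeal.toIdeal_sup,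
    HomogeneousIdeal.toIdeal_sup, HomogeneousIdeal.toIdeal_inf]
  exact IsModularLattice.sup_inf_le_assoc_of_le _ (le_iff.mp xz)

theorem isCompact_of {J : HomogeneousIdeal 𝒜}
    (h : IsCompactElement J.toIdeal) :
    IsCompactElement J := by
  rw [CompleteLattice.isCompactElement_iff_le_of_directed_sSup_le] at h ⊢
  intro s hne hdir hle
  have hle' : J.toIdeal ≤ sSup (HomogeneousIdeal.toIdeal '' s) := by
    have := le_iff.mp hle
    rw [HomogeneousIdeal.toIdeal_sSup] at this
    simpa [sSup_image] using this
  have hdir' : DirectedOn (· ≤ ·) (HomogeneousIdeal.toIdeal '' s) := by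
    rintro _ ⟨a, ha, rfl⟩ _ ⟨b, hb, rfl⟩
    obtain ⟨c, hc, hac, hbc⟩ := hdir a ha b hb
    exact ⟨c.toIdeal, ⟨c, hc, rfl⟩, le_iff.mp hac, le_iff.mp hbc⟩
  obtain ⟨x, hxs, hx⟩ := h (HomogeneousIdeal.toIdeal '' s) (hne.image _) hdir' hle'
  obtain ⟨K, hKs, rfl⟩ := hxs
  exact ⟨K, hKs, le_iff.mpr hx⟩

instance : IsCompactlyGenerated (HomogeneousIdeal 𝒜) := by
  constructor
  intro I
  refine ⟨{J | ∃ x : R, SetLike.IsHomogeneousElem 𝒜 x ∧ x ∈ I.toIdeal ∧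
    J.toIdeal = Ideal.span {x}}, ?_, ?_⟩
  · rintro J ⟨x, hx, hxI, hJ⟩
    apply isCompact_of
    rw [hJ]
    exact Submodule.singleton_span_isCompactElement x
  · apply le_antisymm
    · apply sSup_le
      rintro J ⟨x, hx, hxI, hJ⟩
      rw [le_iff, hJ]
      exact (Ideal.span_singleton_le_iff_mem _).mpr hxI
    · rw [le_iff, HomogeneousIdeal.toIdeal_sSup]
      intro x hx
      classical
      have := DirectSum.sum_support_decompose 𝒜 x
      rw [← this]
      apply Submodule.sum_mem
      intro γ _
      have hmem : (decompose 𝒜 x γ : R) ∈ I.toIdeal := I.isHomogeneous γ hx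
      have hhom : SetLike.IsHomogeneousElem 𝒜 ((decompose 𝒜 x γ : R)) := ⟨γ, (decompose 𝒜 x γ).2⟩
      have hsp : Ideal.IsHomogeneous 𝒜 (Ideal.span {(decompose 𝒜 x γ : R)}) :=
        Ideal.homogeneous_span 𝒜 _ (by simpa using hhom)
      have hle2 : Ideal.span {(decompose 𝒜 x γ : R)} ≤
          ⨆ J ∈ {J : HomogeneousIdeal 𝒜 | ∃ x : R, SetLike.IsHomogeneousElem 𝒜 x ∧ x ∈ I.toIdeal ∧
            J.toIdeal = Ideal.span {x}}, HomogeneousIdeal.toIdeal J :=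
        le_iSup₂_of_le (⟨Ideal.span {(decompose 𝒜 x γ : R)}, hsp⟩ : HomogeneousIdeal 𝒜)
          ⟨_, hhom, hmem, rfl⟩ le_rfl
      exact hle2 (Ideal.subset_span rfl)

instance : IsCoatomic (HomogeneousIdeal 𝒜) := by
  apply CompleteLattice.coatomic_of_top_compact
  apply isCompact_of
  rw [HomogeneousIdeal.toIdeal_top]
  have := Submodule.singleton_span_isCompactElement (R := R) (M := R) 1
  rwa [show Submodule.span R {(1:R)} = ⊤ from Ideal.span_singleton_one] at this


variable (𝒜) in
/-- The grading on the quotient by a homogeneous ideal. -/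
def quotGrading (m : Ideal R) (γ : Γ) : AddSubgroup (R ⧸ m) :=
  AddSubgroup.map m.mkQ.toAddMonoidHom (𝒜 γ)

variable (𝒜) in
def gmap (m : Ideal R) (γ : Γ) : 𝒜 γ →+ quotGrading 𝒜 m γ where
  toFun a := ⟨Submodule.Quotient.mk a, ⟨a, a.2, rfl⟩⟩
  map_zero' := by ext; simp
  map_add' a b := by ext; simp

variable (𝒜) in
def D0 (m : Ideal R) : R →+ ⨁ γ, quotGrading 𝒜 m γ :=
  (DirectSum.toAddMonoid fun γ =>
    (DirectSum.of (fun γ => quotGrading 𝒜 m γ) γ).comp (gmap 𝒜 m γ)).comp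
    (DirectSum.decomposeAddEquiv 𝒜).toAddMonoidHom

theorem D0_of_mem (m : Ideal R) {x : R} {δ : Γ} (hx : x ∈ 𝒜 δ) :
    D0 𝒜 m x = DirectSum.of _ δ (gmap 𝒜 m δ ⟨x, hx⟩) := by
  unfold D0
  simp only [AddMonoidHom.comp_apply, AddEquiv.coe_toAddMonoidHom]
  rw [show (decomposeAddEquiv 𝒜) x = DirectSum.of _ δ (⟨x, hx⟩ : 𝒜 δ) from
    DirectSum.decompose_of_mem 𝒜 hx]
  rw [DirectSum.toAddMonoid_of]
  rfl

theorem D0_apply_coe (m : Ideal R) (r : R) (γ : Γ) :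
    (D0 𝒜 m r γ : R ⧸ m) = Submodule.Quotient.mk (decompose 𝒜 r γ : R) := by
  induction r using DirectSum.Decomposition.inductionOn 𝒜 with
  | zero => simp
  | @homogeneous δ x =>
    rw [D0_of_mem m x.2]
    rcases eq_or_ne δ γ with rfl | hne
    · rw [DirectSum.of_eq_same]
      rw [DirectSum.decompose_coe, DirectSum.of_eq_same]
      rfl
    · rw [DirectSum.of_eq_of_ne _ _ _ hne.symm]
      rw [DirectSum.decompose_coe, DirectSum.of_eq_of_ne _ _ _ hne.symm]
      simp
  | add a b ha hb =>
    rw [map_add, DirectSum.add_apply, AddSubgroup.coe_add, ha, hb,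
      DirectSum.decompose_add, DirectSum.add_apply, AddSubgroup.coe_add,
      ← Submodule.Quotient.mk_add]

theorem D0_eq_zero (m : Ideal R) (hm : m.IsHomogeneous 𝒜) {z : R} (hz : z ∈ m) :
    D0 𝒜 m z = 0 := by
  refine DFinsupp.ext fun γ => Subtype.ext ?_
  rw [DirectSum.zero_apply, ZeroMemClass.coe_zero, D0_apply_coe,
    Submodule.Quotient.mk_eq_zero]
  exact hm γ hz

/-- decompose on the quotient. -/
def quotDecompose (m : Ideal R) (hm : m.IsHomogeneous 𝒜) :
    R ⧸ m → ⨁ γ, quotGrading 𝒜 m γ := fun y =>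
  Quotient.liftOn' y (D0 𝒜 m) (by
    intro a b hab
    have h : a - b ∈ m := by
      rwa [← Submodule.quotientRel_def (p := m)]
    have := D0_eq_zero m hm h
    rw [map_sub] at this
    exact sub_eq_zero.mp this)

theorem quotDecompose_mk (m : Ideal R) (hm : m.IsHomogeneous 𝒜) (x : R) :
    quotDecompose m hm (Submodule.Quotient.mk x) = D0 𝒜 m x := rfl

theorem coe_D0 (m : Ideal R) (x : R) :
    DirectSum.coeAddMonoidHom (quotGrading 𝒜 m) (D0 𝒜 m x) = Submodule.Quotient.mk x := by
  induction x using DirectSum.Decomposition.inductionOn 𝒜 with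
  | zero => simp
  | @homogeneous δ x =>
    rw [D0_of_mem m x.2, DirectSum.coeAddMonoidHom_of]
    rfl
  | add a b ha hb => rw [map_add, map_add, ha, hb, ← Submodule.Quotient.mk_add]

def quotDecomposition (m : Ideal R) (hm : m.IsHomogeneous 𝒜) :
    DirectSum.Decomposition (quotGrading 𝒜 m) where
  decompose' := quotDecompose m hm
  left_inv y := by
    obtain ⟨x, rfl⟩ := Submodule.Quotient.mk_surjective m y
    rw [quotDecompose_mk, coe_D0]
  right_inv f := by
    induction f using DirectSum.induction_on with
    | zero =>
      rw [map_zero, show ((0 : R ⧸ m) = Submodule.Quotient.mk 0) by simp,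
        quotDecompose_mk, map_zero]
    | of γ w =>
      obtain ⟨x, hx, hmk⟩ := w.2
      have hcoe : DirectSum.coeAddMonoidHom (quotGrading 𝒜 m) (DirectSum.of _ γ w)
          = Submodule.Quotient.mk x := by
        rw [DirectSum.coeAddMonoidHom_of]
        exact hmk.symm
      rw [hcoe, quotDecompose_mk, D0_of_mem m hx]
      congr 1
      exact Subtype.ext hmk
    | add f g hf hg =>
      obtain ⟨a, ha⟩ := Submodule.Quotient.mk_surjective m
        (DirectSum.coeAddMonoidHom (quotGrading 𝒜 m) f)
      obtain ⟨b, hb⟩ := Submodule.Quotient.mk_surjective m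
        (DirectSum.coeAddMonoidHom (quotGrading 𝒜 m) g)
      rw [map_add, ← ha, ← hb, ← Submodule.Quotient.mk_add, quotDecompose_mk, map_add,
        ← quotDecompose_mk m hm, ← quotDecompose_mk m hm, ha, hb, hf, hg]

theorem quotDecompose_commute (m : Ideal R) (hm : m.IsHomogeneous 𝒜) (x : R) (γ : Γ) :
    letI := quotDecomposition m hm
    (DirectSum.decompose (quotGrading 𝒜 m) (Submodule.Quotient.mk x : R ⧸ m) γ : R ⧸ m)
      = Submodule.Quotient.mk (decompose 𝒜 x γ : R) := by
  letI := quotDecomposition m hm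
  have : DirectSum.decompose (quotGrading 𝒜 m) (Submodule.Quotient.mk x : R ⧸ m)
      = D0 𝒜 m x := rfl
  rw [this, D0_apply_coe]

theorem quotGrading_smul (m : Ideal R) (γ δ : Γ) (r : R) (hr : r ∈ 𝒜 γ) :
    ∀ y ∈ quotGrading 𝒜 m δ, r • y ∈ quotGrading 𝒜 m (γ + δ) := by
  rintro _ ⟨x, hx, rfl⟩
  refine ⟨r * x, SetLike.GradedMul.mul_mem hr hx, ?_⟩
  simp only [LinearMap.toAddMonoidHom_coe, Submodule.mkQ_apply]
  rw [← Submodule.Quotient.mk_smul, smul_eq_mul]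

section Split

variable (𝒜)
variable (m : Ideal R) [inst : DirectSum.Decomposition (quotGrading 𝒜 m)]

theorem decompose_mk (hm : m.IsHomogeneous 𝒜) (x : R) (γ : Γ) :
    (DirectSum.decompose (quotGrading 𝒜 m) (Submodule.Quotient.mk x : R ⧸ m) γ : R ⧸ m)
      = Submodule.Quotient.mk (decompose 𝒜 x γ : R) := by
  rw [Subsingleton.elim inst (quotDecomposition m hm)]
  exact quotDecompose_commute m hm x γ

variable (s : (R ⧸ m) →ₗ[R] R)

def gcomp (γ : Γ) : quotGrading 𝒜 m γ →+ R where
  toFun w := (decompose 𝒜 (s w) γ : R)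
  map_zero' := by simp
  map_add' w w' := by
    push_cast
    rw [map_add, DirectSum.decompose_add, DirectSum.add_apply, AddSubgroup.coe_add]

def sFun : R ⧸ m → R := fun x =>
  DirectSum.toAddMonoid (gcomp 𝒜 m s) (DirectSum.decompose (quotGrading 𝒜 m) x)

theorem sFun_of_mem {x : R ⧸ m} {γ : Γ} (hx : x ∈ quotGrading 𝒜 m γ) :
    sFun 𝒜 m s x = (decompose 𝒜 (s x) γ : R) := by
  unfold sFun
  rw [DirectSum.decompose_of_mem _ hx, DirectSum.toAddMonoid_of]
  rfl

theorem sFun_zero : sFun 𝒜 m s 0 = 0 := by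
  unfold sFun; rw [DirectSum.decompose_zero, map_zero]

theorem sFun_add (a b : R ⧸ m) : sFun 𝒜 m s (a + b) = sFun 𝒜 m s a + sFun 𝒜 m s b := by
  unfold sFun; rw [DirectSum.decompose_add, map_add]

theorem sFun_smul (r : R) (x : R ⧸ m) : sFun 𝒜 m s (r • x) = r * sFun 𝒜 m s x := by
  induction r using DirectSum.Decomposition.inductionOn 𝒜 with
  | zero => rw [zero_smul, sFun_zero 𝒜, zero_mul]
  | @homogeneous δ r =>
    induction x using DirectSum.Decomposition.inductionOn (quotGrading 𝒜 m) with
    | zero => rw [smul_zero, sFun_zero 𝒜, mul_zero]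
    | @homogeneous γ w =>
      have h1 : (r : R) • (w : R ⧸ m) ∈ quotGrading 𝒜 m (δ + γ) :=
        quotGrading_smul m δ γ r r.2 w w.2
      rw [sFun_of_mem 𝒜 m s h1, sFun_of_mem 𝒜 m s w.2, map_smul, smul_eq_mul,
        DirectSum.coe_decompose_mul_add_of_left_mem 𝒜 r.2]
    | add a b ha hb =>
      rw [smul_add, sFun_add 𝒜, ha, hb, sFun_add 𝒜, mul_add]
  | add r r' hr hr' =>
    rw [add_smul, sFun_add 𝒜, hr, hr', add_mul]

def sLin : (R ⧸ m) →ₗ[R] R where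
  toFun := sFun 𝒜 m s
  map_add' := sFun_add 𝒜 m s
  map_smul' r x := by rw [RingHom.id_apply, smul_eq_mul]; exact sFun_smul 𝒜 m s r x

theorem mk_sFun (hm : m.IsHomogeneous 𝒜) (hs : m.mkQ.comp s = LinearMap.id) (x : R ⧸ m) :
    Submodule.Quotient.mk (sFun 𝒜 m s x) = x := by
  have hsx : ∀ y : R ⧸ m, Submodule.Quotient.mk (s y) = y := fun y => by
    have := DFunLike.congr_fun hs y
    simpa [Submodule.mkQ_apply] using this
  induction x using DirectSum.Decomposition.inductionOn (quotGrading 𝒜 m) with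
  | zero => rw [sFun_zero 𝒜]; simp
  | @homogeneous γ w =>
    rw [sFun_of_mem 𝒜 m s w.2, ← decompose_mk 𝒜 m hm, hsx]
    exact DirectSum.decompose_of_mem_same _ w.2
  | add a b ha hb => rw [sFun_add 𝒜, Submodule.Quotient.mk_add, ha, hb]

theorem sFun_decompose (x : R ⧸ m) (γ : Γ) :
    (decompose 𝒜 (sFun 𝒜 m s x) γ : R)
      = sFun 𝒜 m s (DirectSum.decompose (quotGrading 𝒜 m) x γ : R ⧸ m) := by
  induction x using DirectSum.Decomposition.inductionOn (quotGrading 𝒜 m) with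
  | zero => rw [sFun_zero 𝒜]; simp [sFun_zero 𝒜]
  | @homogeneous δ w =>
    have hmem : sFun 𝒜 m s (w : R ⧸ m) ∈ 𝒜 δ := by
      rw [sFun_of_mem 𝒜 m s w.2]; exact (decompose 𝒜 (s w) δ).2
    rcases eq_or_ne δ γ with rfl | hne
    · rw [DirectSum.decompose_of_mem_same 𝒜 hmem]
      congr 1
      exact (DirectSum.decompose_of_mem_same _ w.2).symm
    · rw [DirectSum.decompose_of_mem_ne 𝒜 hmem hne,
        DirectSum.decompose_of_mem_ne _ w.2 hne, sFun_zero]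
  | add a b ha hb =>
    rw [sFun_add 𝒜, DirectSum.decompose_add, DirectSum.add_apply, AddSubgroup.coe_add, ha, hb,
      DirectSum.decompose_add, DirectSum.add_apply, AddSubgroup.coe_add, sFun_add 𝒜]

end Split


theorem atoms_sSup_eq_top
    (hproj : ∀ (M : Type u) [AddCommGroup M] [Module R M]
      (ℳ : Γ → AddSubgroup M) [DirectSum.Decomposition ℳ],
      (∀ (γ δ : Γ) (r : R), r ∈ 𝒜 γ → ∀ m ∈ ℳ δ, r • m ∈ ℳ (γ + δ)) →
      Nontrivial M →
      (∀ N : Submodule R M,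
        (∀ x ∈ N, ∀ γ : Γ, (DirectSum.decompose ℳ x γ : M) ∈ N) → N = ⊥ ∨ N = ⊤) →
      Module.Projective R M) :
    sSup {a : HomogeneousIdeal 𝒜 | IsAtom a} = ⊤ := by
  by_contra hT
  obtain ⟨mC, hmC, hle⟩ :=
    (eq_top_or_exists_le_coatom (sSup {a : HomogeneousIdeal 𝒜 | IsAtom a})).resolve_left hT
  set m : Ideal R := mC.toIdeal with hmdef
  have hm : m.IsHomogeneous 𝒜 := mC.isHomogeneous
  letI instD := quotDecomposition m hm
  have hmne : m ≠ ⊤ := by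
    intro h
    exact hmC.1 (HomogeneousIdeal.toIdeal_injective
      (by rw [← hmdef, h, HomogeneousIdeal.toIdeal_top]))
  haveI hnt : Nontrivial (R ⧸ m) :=
    Submodule.Quotient.nontrivial_iff.mpr hmne
  have hsimple : ∀ N : Submodule R (R ⧸ m),
      (∀ x ∈ N, ∀ γ : Γ, (DirectSum.decompose (quotGrading 𝒜 m) x γ : R ⧸ m) ∈ N) →
      N = ⊥ ∨ N = ⊤ := by
    intro N hN
    set N' : Ideal R := N.comap m.mkQ with hN'def
    have hmN' : m ≤ N' := by
      intro x hx
      simp only [hN'def, Submodule.mem_comap, Submodule.mkQ_apply]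
      rw [show (Submodule.Quotient.mk x : R ⧸ m) = 0 from (Submodule.Quotient.mk_eq_zero m).mpr hx]
      exact N.zero_mem
    have hN'hom : N'.IsHomogeneous 𝒜 := by
      intro γ x hx
      have h1 : (Submodule.Quotient.mk x : R ⧸ m) ∈ N := hx
      have h2 := hN _ h1 γ
      rw [decompose_mk 𝒜 m hm] at h2
      exact h2
    have hcase : N' = m ∨ N' = ⊤ := by
      have hle' : mC ≤ (⟨N', hN'hom⟩ : HomogeneousIdeal 𝒜) := le_iff.mpr hmN'
      rcases eq_or_lt_of_le hle' with h | h
      · exact Or.inl (congrArg HomogeneousIdeal.toIdeal h).symm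
      · right
        have := hmC.2 _ h
        exact (congrArg HomogeneousIdeal.toIdeal this).trans HomogeneousIdeal.toIdeal_top
    have hmap : N = Submodule.map m.mkQ N' :=
      (Submodule.map_comap_eq_of_surjective (Submodule.mkQ_surjective m) N).symm
    rcases hcase with h | h
    · left
      rw [hmap, h]
      rw [eq_bot_iff]
      intro z hz
      obtain ⟨y, hy, rfl⟩ := Submodule.mem_map.mp hz
      simp only [Submodule.mkQ_apply]
      rw [Submodule.mem_bot, Submodule.Quotient.mk_eq_zero]
      exact hy
    · right
      rw [hmap, h, Submodule.map_top, Submodule.range_mkQ]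
  haveI hprojM : Module.Projective R (R ⧸ m) :=
    hproj (R ⧸ m) (quotGrading 𝒜 m) (quotGrading_smul m) hnt hsimple
  obtain ⟨s, hs⟩ := Module.projective_lifting_property m.mkQ LinearMap.id
    (Submodule.mkQ_surjective m)
  have hdis : ∀ x : R ⧸ m, sFun 𝒜 m s x ∈ m → x = 0 := by
    intro x hx
    have h1 := mk_sFun 𝒜 m s hm hs x
    rw [(Submodule.Quotient.mk_eq_zero m).mpr hx] at h1
    exact h1.symm
  set K : Ideal R := LinearMap.range (sLin 𝒜 m s) with hKdef
  have hKmem : ∀ x : R ⧸ m, sFun 𝒜 m s x ∈ K := fun x => ⟨x, rfl⟩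
  have hKel : ∀ y ∈ K, ∃ x, sFun 𝒜 m s x = y := by
    intro y hy
    obtain ⟨x, hx⟩ := hy
    exact ⟨x, hx⟩
  have hKhom : K.IsHomogeneous 𝒜 := by
    rintro γ y hy
    obtain ⟨x, rfl⟩ := hKel y hy
    rw [sFun_decompose 𝒜 m s x γ]
    exact hKmem _
  have hKbot : K ≠ ⊥ := by
    obtain ⟨x, hx⟩ := exists_ne (0 : R ⧸ m)
    intro h
    apply hx
    have h0 : sFun 𝒜 m s x = 0 := by
      have := hKmem x
      rw [h, Submodule.mem_bot] at this
      exact this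
    have h1 := mk_sFun 𝒜 m s hm hs x
    rw [h0] at h1
    simpa using h1.symm
  have hmin : ∀ J : Ideal R, J.IsHomogeneous 𝒜 → J ≤ K → J = ⊥ ∨ J = K := by
    intro J hJ hJK
    by_cases hJbot : J = ⊥
    · exact Or.inl hJbot
    right
    set N : Submodule R (R ⧸ m) := Submodule.map m.mkQ J with hNdef
    have hNstab : ∀ x ∈ N, ∀ γ : Γ,
        (DirectSum.decompose (quotGrading 𝒜 m) x γ : R ⧸ m) ∈ N := by
      intro x hxN γ
      obtain ⟨j, hj, rfl⟩ := Submodule.mem_map.mp hxN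
      simp only [Submodule.mkQ_apply]
      rw [decompose_mk 𝒜 m hm]
      exact Submodule.mem_map.mpr ⟨_, hJ γ hj, rfl⟩
    have hNne : N ≠ ⊥ := by
      obtain ⟨j, hjJ, hjne⟩ := (Submodule.ne_bot_iff J).mp hJbot
      intro h
      obtain ⟨x, hx⟩ := hKel j (hJK hjJ)
      have hjm : j ∈ m := by
        have h1 : m.mkQ j ∈ N := Submodule.mem_map.mpr ⟨j, hjJ, rfl⟩
        rw [h, Submodule.mem_bot] at h1
        simp only [Submodule.mkQ_apply] at h1
        exact (Submodule.Quotient.mk_eq_zero m).mp h1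
      have hx0 : x = 0 := hdis x (hx ▸ hjm)
      exact hjne (by rw [← hx, hx0, sFun_zero 𝒜])
    have hNtop : N = ⊤ := (hsimple N hNstab).resolve_left hNne
    apply le_antisymm hJK
    intro y hy
    obtain ⟨x, hx⟩ := hKel y hy
    have hxN : x ∈ N := by rw [hNtop]; trivial
    obtain ⟨j, hjJ, hjx⟩ := Submodule.mem_map.mp hxN
    simp only [Submodule.mkQ_apply] at hjx
    have hyj : y - j ∈ m := by
      rw [← Submodule.Quotient.mk_eq_zero m, Submodule.Quotient.mk_sub, hjx, ← hx,
        mk_sFun 𝒜 m s hm hs x, sub_self]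
    have hyjK : y - j ∈ K := K.sub_mem hy (hJK hjJ)
    obtain ⟨z, hz⟩ := hKel _ hyjK
    have hz0 : z = 0 := hdis z (hz ▸ hyj)
    have hyj0 : y - j = 0 := by rw [← hz, hz0, sFun_zero 𝒜]
    rw [sub_eq_zero.mp hyj0]
    exact hjJ
  have hKatom : IsAtom (⟨K, hKhom⟩ : HomogeneousIdeal 𝒜) := by
    constructor
    · intro h
      exact hKbot ((congrArg HomogeneousIdeal.toIdeal h).trans HomogeneousIdeal.toIdeal_bot)
    · intro b hb
      rcases hmin (HomogeneousIdeal.toIdeal b) (HomogeneousIdeal.isHomogeneous b) (le_iff.mp hb.le) with h | h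
      · exact HomogeneousIdeal.toIdeal_injective (h.trans HomogeneousIdeal.toIdeal_bot.symm)
      · exact absurd (show b = (⟨K, hKhom⟩ : HomogeneousIdeal 𝒜) from
          HomogeneousIdeal.toIdeal_injective h) hb.ne
  have h5 : (⟨K, hKhom⟩ : HomogeneousIdeal 𝒜) ≤ mC := le_trans (le_sSup (show _ ∈ {a : HomogeneousIdeal 𝒜 | IsAtom a} from hKatom)) hle
  have hKm : K ≤ m := le_iff.mp h5
  obtain ⟨y, hyK, hyne⟩ := (Submodule.ne_bot_iff K).mp hKbot
  obtain ⟨x, hx⟩ := hKel y hyK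
  have hx0 : x = 0 := hdis x (hx ▸ hKm hyK)
  exact hyne (by rw [← hx, hx0, sFun_zero 𝒜])

end GradedSS

/-- Let `R` be a `Γ`-graded ring.  If every graded-simple graded left
`R`-module is projective as an `R`-module, then `R` is graded semi-simple: `R` is the
internal direct sum of an independent family of minimal graded left ideals. -/
theorem graded_semisimple_of_gradedSimple_projective
    {Γ : Type v} {R : Type u} [AddCommGroup Γ] [DecidableEq Γ] [Ring R]
    (𝒜 : Γ → AddSubgroup R) [GradedRing 𝒜]
    (hproj : ∀ (M : Type u) [AddCommGroup M] [Module R M]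
      (ℳ : Γ → AddSubgroup M) [DirectSum.Decomposition ℳ],
      (∀ (γ δ : Γ) (r : R), r ∈ 𝒜 γ → ∀ m ∈ ℳ δ, r • m ∈ ℳ (γ + δ)) →
      Nontrivial M →
      (∀ N : Submodule R M,
        (∀ x ∈ N, ∀ γ : Γ, (DirectSum.decompose ℳ x γ : M) ∈ N) → N = ⊥ ∨ N = ⊤) →
      Module.Projective R M) :
    ∃ (ι : Type u) (I : ι → Ideal R),
      (∀ i, I i ≠ ⊥) ∧
      (∀ i, ∀ x ∈ I i, ∀ γ : Γ, (DirectSum.decompose 𝒜 x γ : R) ∈ I i) ∧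
      (∀ i, ∀ J : Ideal R,
        (∀ x ∈ J, ∀ γ : Γ, (DirectSum.decompose 𝒜 x γ : R) ∈ J) →
        J ≤ I i → J = ⊥ ∨ J = I i) ∧
      (∀ i, Disjoint (I i) (⨆ j ∈ ({i}ᶜ : Set ι), I j)) ∧
      (⨆ i, I i) = ⊤ := by
  classical
  have hT : sSup {a : HomogeneousIdeal 𝒜 | IsAtom a} = ⊤ := GradedSS.atoms_sSup_eq_top hproj
  obtain ⟨sFam, hind, hsup, hatom⟩ := exists_sSupIndep_of_sSup_atoms_eq_top hT
  refine ⟨↥sFam, fun j => (j : HomogeneousIdeal 𝒜).toIdeal, ?_, ?_, ?_, ?_, ?_⟩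
  · intro i h
    exact (hatom i.2).1 (HomogeneousIdeal.toIdeal_injective
      (h.trans HomogeneousIdeal.toIdeal_bot.symm))
  · intro i x hx γ
    exact (i : HomogeneousIdeal 𝒜).isHomogeneous γ hx
  · intro i J hJ hle
    have hJ' : J.IsHomogeneous 𝒜 := fun γ r hr => hJ r hr γ
    have h2 : (⟨J, hJ'⟩ : HomogeneousIdeal 𝒜) ≤ (i : HomogeneousIdeal 𝒜) :=
      GradedSS.le_iff.mpr hle
    rcases ((hatom i.2).le_iff).mp h2 with h | h
    · left
      exact (congrArg HomogeneousIdeal.toIdeal h).trans HomogeneousIdeal.toIdeal_bot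
    · right
      exact congrArg HomogeneousIdeal.toIdeal h
  · intro i
    have hd := hind i.2
    rw [disjoint_iff] at hd ⊢
    have he : (⨆ j ∈ ({i}ᶜ : Set ↥sFam), (j : HomogeneousIdeal 𝒜).toIdeal)
        = (sSup (sFam \ {↑i})).toIdeal := by
      rw [HomogeneousIdeal.toIdeal_sSup]
      apply le_antisymm
      · refine iSup₂_le fun j hj => ?_
        refine le_iSup₂_of_le (j : HomogeneousIdeal 𝒜)
          ⟨j.2, fun h => (Set.mem_compl_singleton_iff.mp hj) (Subtype.ext h)⟩ le_rfl
      · refine iSup₂_le fun J hJ => ?_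
        refine le_iSup₂_of_le (⟨J, hJ.1⟩ : ↥sFam)
          (Set.mem_compl_singleton_iff.mpr fun h => hJ.2 (congrArg Subtype.val h)) le_rfl
    rw [he, ← HomogeneousIdeal.toIdeal_inf, hd, HomogeneousIdeal.toIdeal_bot]
  · have h1 := congrArg HomogeneousIdeal.toIdeal hsup
    rw [HomogeneousIdeal.toIdeal_sSup, HomogeneousIdeal.toIdeal_top] at h1
    rw [← h1]
    apply le_antisymm
    · exact iSup_le fun j => le_iSup₂_of_le (j : HomogeneousIdeal 𝒜) j.2 le_rfl
    · exact iSup₂_le fun J hJ => le_iSup_of_le (⟨J, hJ⟩ : ↥sFam) le_rfl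
end

section
/- Let Γ be an additive abelian group and R a Γ-graded ring. Suppose R is the union of an upward-directed family (B_λ)_{λ ∈ Λ} of subrings such that: (a) each B_λ is a graded subring, i.e., for every b ∈ B_λ all homogeneous components of b lie in B_λ; and (b) every left ideal of each B_λ is graded, i.e., whenever I ⊆ B_λ is an additive subgroup with B_λ · I ⊆ I, then for every x ∈ I all homogeneous components of x lie in I. Then every left ideal M of R is graded: for every a ∈ M, all homogeneous components of a lie in M. -/
/-- Let `R` be a `Γ`-graded ring which is the union of an upward-directed
family `(B l)` of (not necessarily unital) subrings such that each `B l` is a graded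
subring (closed under taking homogeneous components), and every left ideal of each `B l`
is graded.  Then every left ideal `M` of `R` is graded: for every `a ∈ M` all the
homogeneous components of `a` lie in `M`. -/
theorem every_left_ideal_graded_of_directed_union
    {Γ R Λ : Type*} [AddCommGroup Γ] [DecidableEq Γ] [Ring R]
    (𝒜 : Γ → AddSubgroup R) [GradedRing 𝒜]
    (B : Λ → NonUnitalSubring R)
    (hdir : ∀ l m : Λ, ∃ n : Λ, B l ≤ B n ∧ B m ≤ B n)
    (hunion : ∀ r : R, ∃ l : Λ, r ∈ B l)
    (hgraded : ∀ l : Λ, ∀ b ∈ B l, ∀ γ : Γ, (DirectSum.decompose 𝒜 b γ : R) ∈ B l)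
    (hideals : ∀ (l : Λ) (I : AddSubgroup R), (I : Set R) ⊆ (B l : Set R) →
      (∀ b ∈ B l, ∀ x ∈ I, b * x ∈ I) →
      ∀ x ∈ I, ∀ γ : Γ, (DirectSum.decompose 𝒜 x γ : R) ∈ I) :
    ∀ M : Ideal R, ∀ a ∈ M, ∀ γ : Γ, (DirectSum.decompose 𝒜 a γ : R) ∈ M := by
  intro M a ha γ
  obtain ⟨l, hl⟩ := hunion a
  set I : AddSubgroup R :=
    { carrier := {x | x ∈ B l ∧ x ∈ M}
      zero_mem' := ⟨zero_mem _, zero_mem _⟩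
      add_mem' := fun hx hy => ⟨add_mem hx.1 hy.1, add_mem hx.2 hy.2⟩
      neg_mem' := fun hx => ⟨neg_mem hx.1, neg_mem hx.2⟩ } with hI
  have h := hideals l I (fun x hx => hx.1)
    (fun b hb x hx => ⟨mul_mem hb hx.1, M.mul_mem_left b hx.2⟩)
    a ⟨hl, ha⟩ γ
  exact h.2
end

section
/- Let K be a field and let p be an irreducible element of the Laurent polynomial ring K[x, x⁻¹]. Then the quotient M = K[x, x⁻¹]/(p) is a simple K[x, x⁻¹]-module, but M admits no compatible ℤ-grading: there is no family of additive subgroups (M_n)_{n ∈ ℤ} of M with M = ⨁_{n ∈ ℤ} M_n and (K·xᵐ)·M_n ⊆ M_{m+n} for all m, n ∈ ℤ. -/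
open LaurentPolynomial

set_option synthInstance.maxHeartbeats 1000000
set_option maxHeartbeats 1000000

theorem laurent_pid {K : Type*} [Field K] : IsPrincipalIdealRing (LaurentPolynomial K) := by
  haveI := LaurentPolynomial.isLocalization (R := K)
  constructor
  intro I
  have h := (IsLocalization.map_comap (Submonoid.powers (Polynomial.X : Polynomial K))
    (LaurentPolynomial K) I).symm
  obtain ⟨q, hq⟩ := (IsPrincipalIdealRing.principal
    (I.comap (algebraMap (Polynomial K) (LaurentPolynomial K))))
  exact ⟨⟨algebraMap _ _ q, by
    rw [h, Ideal.under_def, hq]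
    exact (Ideal.map_span _ {q}).trans (by rw [Set.image_singleton])⟩⟩

/-- Let `K` be a field and `p` an irreducible element of the Laurent
polynomial ring `K[x,x⁻¹]`.  Then `M = K[x,x⁻¹]/(p)` is a simple `K[x,x⁻¹]`-module, yet
`M` admits no compatible ℤ-grading: there is no family of additive subgroups
`(M_n)_{n ∈ ℤ}` with `M = ⨁_{n} M_n` and `(K·xᵐ) • M_n ⊆ M_{m+n}` for all `m, n`. -/
theorem simple_quotient_of_laurent_not_gradable
    {K : Type*} [Field K] (p : LaurentPolynomial K) (hp : Irreducible p) :
    IsSimpleModule (LaurentPolynomial K)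
      (LaurentPolynomial K ⧸ Ideal.span {p}) ∧
    ¬ ∃ ℳ : ℤ → AddSubgroup (LaurentPolynomial K ⧸ Ideal.span {p}),
        DirectSum.IsInternal ℳ ∧
        ∀ (k : K) (m n : ℤ), ∀ y ∈ ℳ n,
          ((C k * T m : LaurentPolynomial K) • y) ∈ ℳ (m + n) := by
  haveI : IsPrincipalIdealRing (LaurentPolynomial K) := laurent_pid
  have hmax : (Ideal.span {p}).IsMaximal := PrincipalIdealRing.isMaximal_of_irreducible hp
  constructor
  · rw [isSimpleModule_iff_isCoatom]
    exact Ideal.isMaximal_def.mp hmax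
  · rintro ⟨ℳ, hint, hsmul⟩
    haveI : Nontrivial (LaurentPolynomial K ⧸ Ideal.span {p}) :=
      Ideal.Quotient.nontrivial_iff.mpr (by
        rw [Ne, Ideal.span_singleton_eq_top]; exact hp.not_isUnit)
    -- every element of the quotient is killed by `p`
    have key : ∀ z : LaurentPolynomial K ⧸ Ideal.span {p}, p • z = 0 := by
      intro z
      obtain ⟨a, rfl⟩ := Ideal.Quotient.mk_surjective z
      have h1 : p • (Ideal.Quotient.mk (Ideal.span {p}) a)
          = Ideal.Quotient.mk (Ideal.span {p}) (p * a) := rfl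
      rw [h1, Ideal.Quotient.eq_zero_iff_mem]
      exact Ideal.mul_mem_right a _ (Ideal.subset_span rfl)
    -- find a nonzero homogeneous element
    obtain ⟨z, hz⟩ := exists_ne (0 : LaurentPolynomial K ⧸ Ideal.span {p})
    obtain ⟨g, hg⟩ := hint.surjective z
    have hgne : g ≠ 0 := by
      rintro rfl
      exact hz (by simpa using hg.symm)
    obtain ⟨n, hn⟩ : ∃ n, g n ≠ 0 := by
      by_contra h
      push_neg at h
      exact hgne (DFinsupp.ext fun i => by rw [h i, DFinsupp.zero_apply])
    set y : LaurentPolynomial K ⧸ Ideal.span {p} := (g n).1 with hy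
    have hyn : y ∈ ℳ n := (g n).2
    have hyne : y ≠ 0 := fun h => hn (Subtype.ext h)
    -- express p as the sum of its homogeneous components
    have hps : p = ∑ m ∈ p.coeff.support, (C (p.coeff m) * T m : LaurentPolynomial K) := by
      conv_lhs => rw [← AddMonoidAlgebra.sum_coeff_single p]
      rw [Finsupp.sum]
      exact Finset.sum_congr rfl fun m _ => single_eq_C_mul_T (p.coeff m) m
    -- the direct-sum element built from the components of `p • y`
    set g0 : DirectSum ℤ fun i => ℳ i :=
      ∑ m ∈ p.coeff.support, DirectSum.of (fun i => (ℳ i : AddSubgroup _)) (m + n)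
        ⟨(C (p.coeff m) * T m : LaurentPolynomial K) • y, hsmul (p.coeff m) m n y hyn⟩ with hg0
    have hF : DirectSum.coeAddMonoidHom ℳ g0 = 0 := by
      rw [hg0, map_sum]
      simp only [DirectSum.coeAddMonoidHom_of]
      rw [← Finset.sum_smul, ← hps]
      exact key y
    have hg00 : g0 = 0 := hint.injective (by rw [hF]; simp)
    -- pick an index in the support of p
    have hpne : p ≠ 0 := hp.ne_zero
    obtain ⟨m0, hm0⟩ := Finsupp.support_nonempty_iff.mpr (mt AddMonoidAlgebra.coeff_eq_zero.mp hpne)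
    have hcoef : p.coeff m0 ≠ 0 := Finsupp.mem_support_iff.mp hm0
    -- the component of g0 at m0 + n is the m0-term
    have hcomp : ((C (p.coeff m0) * T m0 : LaurentPolynomial K) • y) = 0 := by
      have : g0 (m0 + n) = 0 := by rw [hg00]; rfl
      rw [hg0] at this
      rw [DFinsupp.finset_sum_apply] at this
      have heval : ∀ m ∈ p.coeff.support,
          (DirectSum.of (fun i => (ℳ i : AddSubgroup _)) (m + n)
            ⟨(C (p.coeff m) * T m : LaurentPolynomial K) • y, hsmul (p.coeff m) m n y hyn⟩) (m0 + n)
          = if m = m0 then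
              ⟨(C (p.coeff m0) * T m0 : LaurentPolynomial K) • y, hsmul (p.coeff m0) m0 n y hyn⟩ else 0 := by
        intro m _
        by_cases hmm : m = m0
        · subst hmm
          simp [DirectSum.of_eq_same]
        · rw [if_neg hmm]
          exact DirectSum.of_eq_of_ne _ _ _ (by omega)
      rw [Finset.sum_congr rfl heval, Finset.sum_ite_eq' p.coeff.support m0] at this
      rw [if_pos hm0] at this
      exact congrArg Subtype.val this
    -- but C (p.coeff m0) * T m0 is a unit, contradiction
    have hu : IsUnit (C (p.coeff m0) * T m0 : LaurentPolynomial K) :=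
      ((isUnit_iff_ne_zero.mpr hcoef).map (C : K →+* LaurentPolynomial K)).mul (isUnit_T m0)
    exact hyne (hu.smul_eq_zero.mp hcomp)
end
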